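/- For any two orthogonal pure states |ψ₁⟩, |ψ₂⟩ of a bipartite system ℂ^{d_A} ⊗ ℂ^{d_B}, there exists an orthonormal basis {|a_k⟩} of ℂ^{d_A} such that, writing |ψ_i⟩ = Σ_k |a_k⟩ ⊗ |η^i_k⟩, the unnormalized conditional states satisfy ⟨η^1_k | η^2_k⟩ = 0 for every k. -/

import Mathlib

open scoped InnerProductSpace

noncomputable section

/-- The (possibly zero, unnormalized) component of `ψ` on Bob's side along Alice's vector `a`:
`|η⟩ = (⟨a| ⊗ I)|ψ⟩`, i.e. `η b = Σ_x conj (a x) · ψ (x, b)`. -/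
def condState {dA dB : ℕ} (a : EuclideanSpace ℂ (Fin dA))
    (ψ : EuclideanSpace ℂ (Fin dA × Fin dB)) : EuclideanSpace ℂ (Fin dB) :=
  WithLp.toLp 2 (fun b => ∑ x : Fin dA, (starRingEnd ℂ) (a x) * ψ (x, b))

open Finset Matrix

namespace S19

def qf {m : ℕ} (N : Matrix (Fin m) (Fin m) ℂ) (v : EuclideanSpace ℂ (Fin m)) : ℂ :=
  ⟪v, (WithLp.toLp 2 (N.mulVec v) : EuclideanSpace ℂ (Fin m))⟫_ℂ

lemma qf_expand {m : ℕ} (N : Matrix (Fin m) (Fin m) ℂ) (u w : EuclideanSpace ℂ (Fin m)) (α β : ℂ) :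
    qf N (α • u + β • w) = (starRingEnd ℂ) α * α * qf N u
      + (starRingEnd ℂ) α * β * ⟪u, (WithLp.toLp 2 (N.mulVec w) : EuclideanSpace ℂ (Fin m))⟫_ℂ
      + (starRingEnd ℂ) β * α * ⟪w, (WithLp.toLp 2 (N.mulVec u) : EuclideanSpace ℂ (Fin m))⟫_ℂ
      + (starRingEnd ℂ) β * β * qf N w := by
  have h : N.mulVec (α • u + β • w) = α • N.mulVec u + β • N.mulVec w := by
    rw [Matrix.mulVec_add, Matrix.mulVec_smul, Matrix.mulVec_smul]
  simp only [qf, WithLp.ofLp_add, WithLp.ofLp_smul, h, WithLp.toLp_add, WithLp.toLp_smul, inner_add_left, inner_add_right, inner_smul_left, inner_smul_right]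
  ring

lemma inner_expand {m : ℕ} (u w : EuclideanSpace ℂ (Fin m)) (α β : ℂ) :
    ⟪(α • u + β • w : EuclideanSpace ℂ (Fin m)), α • u + β • w⟫_ℂ
      = (starRingEnd ℂ) α * α * ⟪u,u⟫_ℂ + (starRingEnd ℂ) α * β * ⟪u,w⟫_ℂ
      + (starRingEnd ℂ) β * α * ⟪w,u⟫_ℂ + (starRingEnd ℂ) β * β * ⟪w,w⟫_ℂ := by
  simp only [inner_add_left, inner_add_right, inner_smul_left, inner_smul_right]
  ring

lemma qf_smul {m : ℕ} (N : Matrix (Fin m) (Fin m) ℂ) (u : EuclideanSpace ℂ (Fin m)) (α : ℂ) :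
    qf N (α • u) = (starRingEnd ℂ) α * α * qf N u := by
  have h : N.mulVec (α • u) = α • N.mulVec u := Matrix.mulVec_smul ..
  simp only [qf, WithLp.ofLp_smul, h, WithLp.toLp_smul, inner_smul_left, inner_smul_right]; ring

lemma segment_mem {m : ℕ} (N : Matrix (Fin m) (Fin m) ℂ)
    (x y : EuclideanSpace ℂ (Fin m)) (hx : ‖x‖ = 1) (hy : ‖y‖ = 1)
    (s : ℝ) (hs0 : 0 ≤ s) (hs1 : s ≤ 1) :
    ∃ v : EuclideanSpace ℂ (Fin m), ‖v‖ = 1 ∧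
      qf N v = (s : ℂ) * qf N x + ((1 - s : ℝ) : ℂ) * qf N y := by
  have hxx : ⟪x, x⟫_ℂ = 1 := by rw [inner_self_eq_norm_sq_to_K, hx]; norm_num
  have hyy : ⟪y, y⟫_ℂ = 1 := by rw [inner_self_eq_norm_sq_to_K, hy]; norm_num
  set P := qf N x with hPdef
  set Q := qf N y with hQdef
  by_cases hPQ : P = Q
  · refine ⟨x, hx, ?_⟩
    show P = (s : ℂ) * P + ((1 - s : ℝ) : ℂ) * Q
    rw [hPQ]; push_cast; ring
  have hPQ' : P - Q ≠ 0 := sub_ne_zero.mpr hPQ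
  set Sxy := ⟪x, (WithLp.toLp 2 (N.mulVec y) : EuclideanSpace ℂ (Fin m))⟫_ℂ with hSxy
  set Syx := ⟪y, (WithLp.toLp 2 (N.mulVec x) : EuclideanSpace ℂ (Fin m))⟫_ℂ with hSyx
  set ixy := ⟪x, y⟫_ℂ with hixy
  set iyx := ⟪y, x⟫_ℂ with hiyx
  set p := (Syx - Q * iyx) / (P - Q) with hp
  set q := (Sxy - Q * ixy) / (P - Q) with hq
  set r := p - (starRingEnd ℂ) q with hr
  set c : ℂ := if r = 0 then 1 else (starRingEnd ℂ) r / (‖r‖ : ℂ) with hcdef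
  have hcabs : ‖c‖ = 1 := by
    by_cases h : r = 0
    · simp [hcdef, h]
    · simp [hcdef, h, map_div₀, Complex.norm_conj, Complex.norm_real, abs_of_nonneg,
        (norm_pos_iff.mpr h).le, div_self (norm_ne_zero_iff.mpr h)]
  have hcc : (starRingEnd ℂ) c * c = 1 := by
    have := Complex.mul_conj c
    rw [mul_comm] at this
    rw [this, Complex.normSq_eq_norm_sq, hcabs]; norm_num
  have hcr : (c * r).im = 0 := by
    by_cases h : r = 0
    · simp [h]
    · have : c * r = ((Complex.normSq r : ℝ) : ℂ) / ((‖r‖ : ℝ) : ℂ) := by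
        rw [hcdef, if_neg h, div_mul_eq_mul_div, mul_comm, Complex.mul_conj]
      rw [this, ← Complex.ofReal_div, Complex.ofReal_im]
  have him : (c * p + (starRingEnd ℂ) c * q).im = 0 := by
    have h2 : (starRingEnd ℂ) c * q = (starRingEnd ℂ) (c * (starRingEnd ℂ) q) := by
      rw [_root_.map_mul, Complex.conj_conj]
    have h1 : c * p + (starRingEnd ℂ) c * q
        = c * r + (c * (starRingEnd ℂ) q + (starRingEnd ℂ) (c * (starRingEnd ℂ) q)) := by
      rw [← h2, hr]; ring
    rw [h1, Complex.add_conj]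
    simp [hcr]
  set γ : ℝ := (c * p + (starRingEnd ℂ) c * q).re with hγdef
  have hγ : c * p + (starRingEnd ℂ) c * q = (γ : ℂ) := by
    apply Complex.ext
    · simp [hγdef]
    · simp [him]
  set z : ℝ → EuclideanSpace ℂ (Fin m) :=
    fun t => ((1 - t : ℝ) : ℂ) • y + ((t : ℝ) : ℂ) • (c • x) with hzdef
  have hzeq : ∀ t : ℝ, z t = ((1 - t : ℝ) : ℂ) • y + (((t : ℝ) : ℂ) * c) • x := by
    intro t; rw [hzdef]; simp [smul_smul]
  have hkey : ∀ t : ℝ, qf N (z t) - Q * ⟪z t, z t⟫_ℂ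
      = (P - Q) * ((t : ℂ)^2 + (t : ℂ) * ((1 - t : ℝ) : ℂ) * (γ : ℂ)) := by
    intro t
    rw [hzeq t, qf_expand, inner_expand]
    rw [← hQdef, ← hPdef, ← hSyx, ← hSxy, ← hiyx, ← hixy, hyy, hxx]
    have hpe : Syx - Q * iyx = (P - Q) * p := by rw [hp]; field_simp
    have hqe : Sxy - Q * ixy = (P - Q) * q := by rw [hq]; field_simp
    have hconj1 : (starRingEnd ℂ) ((1 - t : ℝ) : ℂ) = ((1 - t : ℝ) : ℂ) := Complex.conj_ofReal _
    have hconj2 : (starRingEnd ℂ) (((t : ℝ) : ℂ) * c) = ((t : ℝ) : ℂ) * (starRingEnd ℂ) c := by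
      rw [_root_.map_mul, Complex.conj_ofReal]
    rw [hconj1, hconj2, ← hγ]
    linear_combination ((1 - t : ℝ) : ℂ) * (t : ℂ) * c * hpe
      + ((1 - t : ℝ) : ℂ) * (t : ℂ) * (starRingEnd ℂ) c * hqe
      + ((t:ℂ)^2 * P - (t:ℂ)^2 * Q) * hcc
  have hc0 : c ≠ 0 := by
    intro h; rw [h] at hcabs; simp at hcabs
  have hx0 : x ≠ 0 := by intro h; rw [h] at hx; simp at hx
  have hnz : ∀ t : ℝ, z t ≠ 0 := by
    intro t h0
    rw [hzeq t] at h0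
    by_cases ht : ((1 - t : ℝ) : ℂ) = 0
    · rw [ht, zero_smul, zero_add] at h0
      rcases smul_eq_zero.mp h0 with h | h
      · rcases mul_eq_zero.mp h with h | h
        · rw [Complex.ofReal_eq_zero] at h
          rw [h] at ht; norm_num at ht
        · exact hc0 h
      · exact hx0 h
    · set d : ℂ := -(((t : ℝ) : ℂ) * c) / ((1 - t : ℝ) : ℂ) with hd
      have hyd : y = d • x := by
        have h2 : ((1 - t : ℝ) : ℂ) • y = -((((t : ℝ) : ℂ) * c) • x) :=
          eq_neg_of_add_eq_zero_left h0
        calc y = (((1 - t : ℝ) : ℂ)⁻¹ * ((1 - t : ℝ) : ℂ)) • y := by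
              rw [inv_mul_cancel₀ ht, one_smul]
          _ = ((1 - t : ℝ) : ℂ)⁻¹ • (((1 - t : ℝ) : ℂ) • y) := by rw [mul_smul]
          _ = ((1 - t : ℝ) : ℂ)⁻¹ • (-((((t : ℝ) : ℂ) * c) • x)) := by rw [h2]
          _ = d • x := by
              rw [smul_neg, smul_smul, ← neg_smul, hd]
              congr 1
              field_simp
      have h1 : ⟪y, y⟫_ℂ = (starRingEnd ℂ) d * d := by
        rw [hyd, inner_smul_left, inner_smul_right, hxx]; ring
      have hdd : (starRingEnd ℂ) d * d = 1 := by rw [← h1, hyy]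
      have : Q = P := by
        rw [hQdef, hyd, qf_smul, hdd, ← hPdef, one_mul]
      exact hPQ this.symm
  have hnorm_pos : ∀ t : ℝ, 0 < ‖z t‖ := fun t => norm_pos_iff.mpr (hnz t)
  have hzcont : Continuous z := by
    rw [hzdef]; fun_prop
  have hden : ∀ t : ℝ, ‖z t‖^2 ≠ 0 := fun t => pow_ne_zero _ (hnorm_pos t).ne'
  set g : ℝ → ℝ := fun t => (t^2 + t*(1-t)*γ) / ‖z t‖^2 with hgdef
  have hgcont : Continuous g := by
    apply Continuous.div (by fun_prop) ((hzcont.norm).pow 2) hden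
  have hz1 : z 1 = c • x := by rw [hzdef]; simp
  have hnz1 : ‖z 1‖ = 1 := by
    rw [hz1, norm_smul]
    simp [hx, hcabs]
  have hg1 : g 1 = 1 := by rw [hgdef]; simp [hnz1]
  have hg0 : g 0 = 0 := by rw [hgdef]; simp
  have hsmem : s ∈ Set.Icc (g 0) (g 1) := by rw [hg0, hg1]; exact ⟨hs0, hs1⟩
  obtain ⟨t, htI, hts⟩ :=
    intermediate_value_Icc (by norm_num : (0:ℝ) ≤ 1) hgcont.continuousOn hsmem
  set ρ : ℝ := ‖z t‖ with hρ
  have hρpos : 0 < ρ := hnorm_pos t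
  refine ⟨((ρ⁻¹ : ℝ) : ℂ) • z t, ?_, ?_⟩
  · rw [norm_smul]
    simp only [Complex.norm_real, Real.norm_eq_abs, abs_inv, ← hρ]
    rw [abs_of_pos hρpos]
    exact inv_mul_cancel₀ hρpos.ne'
  · have hzin : ⟪z t, z t⟫_ℂ = ((ρ^2 : ℝ) : ℂ) := by
      rw [inner_self_eq_norm_sq_to_K, ← hρ]; norm_cast
    have e1 : qf N (((ρ⁻¹:ℝ):ℂ) • z t) = (((ρ⁻¹)^2 : ℝ):ℂ) * qf N (z t) := by
      rw [qf_smul, Complex.conj_ofReal]; push_cast; ring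
    rw [e1]
    have e2 : qf N (z t) = Q * ((ρ^2:ℝ):ℂ)
        + (P - Q) * ((t:ℂ)^2 + (t:ℂ)*((1-t:ℝ):ℂ)*(γ:ℂ)) := by
      have := hkey t
      rw [hzin] at this
      linear_combination this
    rw [e2]
    have htsR : t^2 + t*(1-t)*γ = s * ρ^2 := by
      have h' := hts
      rw [hgdef] at h'
      field_simp [← hρ] at h'
      rw [div_eq_iff (hden t)] at h'; rw [hρ]; linear_combination h'
    have hts' : (t:ℂ)^2 + (t:ℂ)*((1-t:ℝ):ℂ)*(γ:ℂ) = (s:ℂ) * ((ρ^2:ℝ):ℂ) := by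
      calc (t:ℂ)^2 + (t:ℂ)*((1-t:ℝ):ℂ)*(γ:ℂ) = ((t^2 + t*(1-t)*γ : ℝ) : ℂ) := by
            push_cast; ring
        _ = ((s * ρ^2 : ℝ) : ℂ) := by rw [htsR]
        _ = (s:ℂ) * ((ρ^2:ℝ):ℂ) := by push_cast; ring
    rw [hts']
    have hρC : ((ρ:ℝ):ℂ) ≠ 0 := by
      simp [Complex.ofReal_eq_zero, hρpos.ne']
    push_cast
    field_simp
    ring

end S19

namespace S19b
open S19

lemma exists_unit_qf_zero {m : ℕ} (hm : m ≠ 0) (N : Matrix (Fin m) (Fin m) ℂ)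
    (htr : N.trace = 0) :
    ∃ v : EuclideanSpace ℂ (Fin m), ‖v‖ = 1 ∧ qf N v = 0 := by
  set W : Set ℂ := {w | ∃ v : EuclideanSpace ℂ (Fin m), ‖v‖ = 1 ∧ qf N v = w} with hW
  have hconv : Convex ℝ W := by
    intro w1 hw1 w2 hw2 α β hα hβ hab
    obtain ⟨x, hx, hx2⟩ := hw1
    obtain ⟨y, hy, hy2⟩ := hw2
    obtain ⟨v, hv, hv2⟩ := segment_mem N x y hx hy α hα (by linarith)
    refine ⟨v, hv, ?_⟩
    rw [hv2, hx2, hy2]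
    have hb' : β = 1 - α := by linarith
    rw [hb', Complex.real_smul, Complex.real_smul]
  have hdiag : ∀ k : Fin m, N k k ∈ W := by
    intro k
    refine ⟨EuclideanSpace.single k 1, ?_, ?_⟩
    · simp [EuclideanSpace.norm_single]
    · simp [qf, EuclideanSpace.inner_single_left, Matrix.mulVec, dotProduct,
        EuclideanSpace.single_apply]
  have hsum : ∑ k : Fin m, ((m:ℝ)⁻¹) • N k k ∈ W := by
    apply hconv.sum_mem
    · intro i _; positivity
    · rw [Finset.sum_const, Finset.card_univ, Fintype.card_fin, nsmul_eq_mul]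
      exact mul_inv_cancel₀ (Nat.cast_ne_zero.mpr hm)
    · intro i _; exact hdiag i
  have hzero : ∑ k : Fin m, ((m:ℝ)⁻¹) • N k k = 0 := by
    rw [← Finset.smul_sum]
    have : ∑ k : Fin m, N k k = N.trace := rfl
    rw [this, htr, smul_zero]
  rw [hzero] at hsum
  exact hsum

lemma sum_qf_onb {m : ℕ} (N : Matrix (Fin m) (Fin m) ℂ)
    (b : OrthonormalBasis (Fin m) ℂ (EuclideanSpace ℂ (Fin m))) :
    ∑ k, qf N (b k) = N.trace := by
  have horth : ∀ k l, ⟪b k, b l⟫_ℂ = if k = l then 1 else 0 :=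
    fun k l => orthonormal_iff_ite.mp b.orthonormal k l
  set A : Matrix (Fin m) (Fin m) ℂ := Matrix.of fun k x => (starRingEnd ℂ) (b k x) with hA
  have hAA : A * Aᴴ = 1 := by
    ext k l
    have h1 : (A * Aᴴ) k l = ∑ x, (starRingEnd ℂ) (b k x) * (b l x) := by
      simp [Matrix.mul_apply, Matrix.conjTranspose_apply, hA]
    rw [h1]
    have h2 : ∑ x, (starRingEnd ℂ) (b k x) * (b l x) = ⟪b k, b l⟫_ℂ := by
      rw [PiLp.inner_apply]
      simp [RCLike.inner_apply, mul_comm]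
    rw [h2, horth, Matrix.one_apply]
  have hATA : Aᴴ * A = 1 := mul_eq_one_comm.mp hAA
  have hcol : ∀ x y : Fin m, ∑ k, (b k x) * (starRingEnd ℂ) (b k y)
      = if x = y then 1 else 0 := by
    intro x y
    have h1 : (Aᴴ * A) x y = ∑ k, (b k x) * (starRingEnd ℂ) (b k y) := by
      simp only [Matrix.mul_apply, Matrix.conjTranspose_apply, hA, Matrix.of_apply,
        Complex.conj_conj]
      refine Finset.sum_congr rfl fun k _ => ?_
      simp only [RCLike.star_def, Complex.conj_conj]
    rw [← h1, hATA, Matrix.one_apply]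
  have expand : ∀ k, qf N (b k) = ∑ y, ∑ x, N y x * ((b k x) * (starRingEnd ℂ) (b k y)) := by
    intro k
    simp only [qf, PiLp.inner_apply, RCLike.inner_apply, Matrix.mulVec, dotProduct]
    refine Finset.sum_congr rfl fun y _ => ?_
    rw [Finset.sum_mul]
    exact Finset.sum_congr rfl fun x _ => by ring
  calc ∑ k, qf N (b k)
      = ∑ k, ∑ y, ∑ x, N y x * ((b k x) * (starRingEnd ℂ) (b k y)) :=
        Finset.sum_congr rfl fun k _ => expand k
    _ = ∑ y, ∑ x, N y x * (∑ k, (b k x) * (starRingEnd ℂ) (b k y)) := by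
        rw [Finset.sum_comm]
        refine Finset.sum_congr rfl fun y _ => ?_
        rw [Finset.sum_comm]
        refine Finset.sum_congr rfl fun x _ => ?_
        rw [Finset.mul_sum]
    _ = ∑ y, ∑ x, N y x * (if x = y then 1 else 0) := by
        refine Finset.sum_congr rfl fun y _ => Finset.sum_congr rfl fun x _ => ?_
        rw [hcol]
    _ = ∑ y, N y y := by
        refine Finset.sum_congr rfl fun y _ => ?_
        simp
    _ = N.trace := rfl

lemma inner_combo {m M : ℕ} (w : Fin m → EuclideanSpace ℂ (Fin M))
    (hw : Orthonormal ℂ w) (p q : Fin m → ℂ) :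
    ⟪∑ i, p i • w i, ∑ j, q j • w j⟫_ℂ = ∑ i, (starRingEnd ℂ) (p i) * q i := by
  rw [sum_inner]
  refine Finset.sum_congr rfl fun i _ => ?_
  rw [inner_sum]
  simp only [inner_smul_left, inner_smul_right, orthonormal_iff_ite.mp hw, mul_ite,
    mul_one, mul_zero, Finset.sum_ite_eq, Finset.mem_univ, if_true]
  ring

lemma qf_combo {m M : ℕ} (N : Matrix (Fin M) (Fin M) ℂ)
    (w : Fin m → EuclideanSpace ℂ (Fin M)) (p : Fin m → ℂ) :
    qf N (∑ i, p i • w i) = ∑ i, ∑ j, (starRingEnd ℂ) (p i) * p j *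
      ⟪w i, (WithLp.toLp 2 (N.mulVec (w j)) : EuclideanSpace ℂ (Fin M))⟫_ℂ := by
  have hmv : N.mulVec (∑ j, p j • w j : EuclideanSpace ℂ (Fin M))
      = ∑ j, p j • N.mulVec (w j) := by
    simp only [WithLp.ofLp_sum, WithLp.ofLp_smul, Matrix.mulVec_sum, Matrix.mulVec_smul]
  rw [qf, hmv, WithLp.toLp_sum, sum_inner]
  refine Finset.sum_congr rfl fun i _ => ?_
  rw [inner_sum]
  refine Finset.sum_congr rfl fun j _ => ?_
  rw [WithLp.toLp_smul, inner_smul_left, inner_smul_right]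
  ring

end S19b

namespace S19c
open S19 S19b

lemma zero_diag : ∀ (m : ℕ) (N : Matrix (Fin m) (Fin m) ℂ), N.trace = 0 →
    ∃ a : Fin m → EuclideanSpace ℂ (Fin m), Orthonormal ℂ a ∧
      Submodule.span ℂ (Set.range a) = ⊤ ∧ ∀ k, qf N (a k) = 0 := by
  intro m
  induction m with
  | zero =>
    intro N _
    refine ⟨fun k => k.elim0, ⟨fun i => i.elim0, fun i => i.elim0⟩, ?_, fun k => k.elim0⟩
    have hz : ∀ x : EuclideanSpace ℂ (Fin 0), x = 0 := fun x => by ext i; exact i.elim0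
    rw [Submodule.eq_top_iff']
    intro x
    rw [hz x]
    exact Submodule.zero_mem _
  | succ n ih =>
    intro N htr
    obtain ⟨v, hv1, hv0⟩ := exists_unit_qf_zero (Nat.succ_ne_zero n) N htr
    have hcard : Module.finrank ℂ (EuclideanSpace ℂ (Fin (n+1))) = Fintype.card (Fin (n+1)) := by
      rw [finrank_euclideanSpace_fin, Fintype.card_fin]
    have horth1 : Orthonormal ℂ (({0} : Set (Fin (n+1))).restrict (fun _ => v)) := by
      constructor
      · intro i; exact hv1
      · intro i j hij
        exfalso; apply hij
        apply Subtype.ext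
        have hi := i.2; have hj := j.2
        simp only [Set.mem_singleton_iff] at hi hj
        rw [hi, hj]
    obtain ⟨b, hb0⟩ := horth1.exists_orthonormalBasis_extension_of_card_eq hcard
    have hb0' : b 0 = v := hb0 0 rfl
    set C : Matrix (Fin n) (Fin n) ℂ :=
      Matrix.of fun i j => ⟪b i.succ, (WithLp.toLp 2 (N.mulVec (b j.succ)) : EuclideanSpace ℂ (Fin (n+1)))⟫_ℂ
      with hC
    have htrC : C.trace = 0 := by
      have h1 : ∑ k, qf N (b k) = 0 := by rw [sum_qf_onb N b, htr]
      rw [Fin.sum_univ_succ, hb0', hv0, zero_add] at h1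
      have h2 : C.trace = ∑ i : Fin n, qf N (b i.succ) := by
        rw [Matrix.trace]
        refine Finset.sum_congr rfl fun i _ => ?_
        simp [hC, Matrix.diag, qf]
      rw [h2, h1]
    obtain ⟨c, hcorth, hcspan, hcdiag⟩ := ih C htrC
    have hbsucc : Orthonormal ℂ (fun i : Fin n => b i.succ) :=
      b.orthonormal.comp _ (Fin.succ_injective n)
    set a : Fin (n+1) → EuclideanSpace ℂ (Fin (n+1)) :=
      fun k => Fin.cases v (fun i => ∑ j, c i j • b j.succ) k with ha
    have ha0 : a 0 = v := rfl
    have hasucc : ∀ i : Fin n, a i.succ = ∑ j, c i j • b j.succ := fun i => rfl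
    have hbv : ∀ j : Fin n, ⟪v, b j.succ⟫_ℂ = 0 := by
      intro j
      rw [← hb0']
      have h := orthonormal_iff_ite.mp b.orthonormal 0 j.succ
      rw [h, if_neg (Ne.symm (Fin.succ_ne_zero j))]
    have hvb : ∀ j : Fin n, ⟪b j.succ, v⟫_ℂ = 0 := by
      intro j
      rw [← inner_conj_symm, hbv j, map_zero]
    have haorth : Orthonormal ℂ a := by
      rw [orthonormal_iff_ite]
      intro k l
      refine Fin.cases ?_ ?_ k
      · refine Fin.cases ?_ ?_ l
        · rw [ha0, if_pos rfl, inner_self_eq_norm_sq_to_K, hv1]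
          norm_num
        · intro j
          rw [ha0, hasucc, if_neg (Ne.symm (Fin.succ_ne_zero j))]
          rw [inner_sum]
          refine Finset.sum_eq_zero fun x _ => ?_
          rw [inner_smul_right, hbv x, mul_zero]
      · intro i
        refine Fin.cases ?_ ?_ l
        · rw [ha0, hasucc, if_neg (Fin.succ_ne_zero i)]
          rw [sum_inner]
          refine Finset.sum_eq_zero fun x _ => ?_
          rw [inner_smul_left, hvb x, mul_zero]
        · intro j
          rw [hasucc, hasucc, inner_combo _ hbsucc]
          have h := orthonormal_iff_ite.mp hcorth i j
          rw [PiLp.inner_apply] at h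
          simp only [RCLike.inner_apply] at h
          rw [show (∑ x, (starRingEnd ℂ) ((c i) x) * (c j) x) = ∑ x, (c j) x * (starRingEnd ℂ) ((c i) x) from Finset.sum_congr rfl fun x _ => mul_comm _ _, h]
          simp [Fin.succ_inj]
    have haspan : Submodule.span ℂ (Set.range a) = ⊤ := by
      apply haorth.linearIndependent.span_eq_top_of_card_eq_finrank
      rw [Fintype.card_fin, finrank_euclideanSpace_fin]
    refine ⟨a, haorth, haspan, ?_⟩
    intro k
    refine Fin.cases ?_ ?_ k
    · rw [ha0]; exact hv0
    · intro i
      rw [hasucc, qf_combo]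
      have h := hcdiag i
      rw [qf, PiLp.inner_apply] at h
      simp only [RCLike.inner_apply, Matrix.mulVec, dotProduct] at h
      rw [← h]
      refine Finset.sum_congr rfl fun x _ => ?_
      rw [Finset.sum_mul]
      refine Finset.sum_congr rfl fun y _ => ?_
      simp only [hC, Matrix.of_apply]
      ring

end S19c

open S19 S19b S19c

/-- Walgate et al.. -/
theorem stmt19 (dA dB : ℕ) (ψ₁ ψ₂ : EuclideanSpace ℂ (Fin dA × Fin dB))
    (h1 : ‖ψ₁‖ = 1) (h2 : ‖ψ₂‖ = 1) (horth : ⟪ψ₁, ψ₂⟫_ℂ = 0) :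
    ∃ a : Fin dA → EuclideanSpace ℂ (Fin dA),
      Orthonormal ℂ a ∧ Submodule.span ℂ (Set.range a) = ⊤ ∧
      ∀ k, ⟪condState (a k) ψ₁, condState (a k) ψ₂⟫_ℂ = 0 := by
  set N : Matrix (Fin dA) (Fin dA) ℂ :=
    Matrix.of fun y x => ∑ bb : Fin dB, (starRingEnd ℂ) (ψ₁ (x, bb)) * ψ₂ (y, bb) with hN
  have htr : N.trace = 0 := by
    have h1 : N.trace = ∑ y : Fin dA, ∑ bb : Fin dB, (starRingEnd ℂ) (ψ₁ (y, bb)) * ψ₂ (y, bb) := by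
      rw [Matrix.trace]
      refine Finset.sum_congr rfl fun y _ => ?_
      simp [hN, Matrix.diag]
    rw [h1, ← horth, PiLp.inner_apply]
    simp only [RCLike.inner_apply]
    rw [Fintype.sum_prod_type]; exact Finset.sum_congr rfl fun _ _ => Finset.sum_congr rfl fun _ _ => mul_comm _ _
  have hqf : ∀ a : EuclideanSpace ℂ (Fin dA),
      ⟪condState a ψ₁, condState a ψ₂⟫_ℂ = qf N a := by
    intro a
    have hL : ⟪condState a ψ₁, condState a ψ₂⟫_ℂ
        = ∑ bb : Fin dB, ∑ x : Fin dA, ∑ y : Fin dA,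
          (starRingEnd ℂ) (a y) * a x * (starRingEnd ℂ) (ψ₁ (x, bb)) * ψ₂ (y, bb) := by
      rw [PiLp.inner_apply]
      simp only [RCLike.inner_apply, condState, map_sum, _root_.map_mul, Complex.conj_conj]
      refine Finset.sum_congr rfl fun bb _ => ?_
      rw [mul_comm, Finset.sum_mul]
      refine Finset.sum_congr rfl fun x _ => ?_
      rw [Finset.mul_sum]
      refine Finset.sum_congr rfl fun y _ => ?_
      ring
    have hR : qf N a = ∑ y : Fin dA, ∑ x : Fin dA, ∑ bb : Fin dB,
        (starRingEnd ℂ) (a y) * a x * (starRingEnd ℂ) (ψ₁ (x, bb)) * ψ₂ (y, bb) := by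
      rw [qf, PiLp.inner_apply]
      simp only [RCLike.inner_apply, Matrix.mulVec, dotProduct, hN, Matrix.of_apply]
      refine Finset.sum_congr rfl fun y _ => ?_
      rw [Finset.sum_mul]
      refine Finset.sum_congr rfl fun x _ => ?_
      rw [Finset.sum_mul, Finset.sum_mul]
      refine Finset.sum_congr rfl fun bb _ => ?_
      ring
    rw [hL, hR]
    calc ∑ bb : Fin dB, ∑ x : Fin dA, ∑ y : Fin dA,
          (starRingEnd ℂ) (a y) * a x * (starRingEnd ℂ) (ψ₁ (x, bb)) * ψ₂ (y, bb)
        = ∑ x : Fin dA, ∑ bb : Fin dB, ∑ y : Fin dA,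
          (starRingEnd ℂ) (a y) * a x * (starRingEnd ℂ) (ψ₁ (x, bb)) * ψ₂ (y, bb) :=
          Finset.sum_comm
      _ = ∑ x : Fin dA, ∑ y : Fin dA, ∑ bb : Fin dB,
          (starRingEnd ℂ) (a y) * a x * (starRingEnd ℂ) (ψ₁ (x, bb)) * ψ₂ (y, bb) :=
          Finset.sum_congr rfl fun x _ => Finset.sum_comm
      _ = ∑ y : Fin dA, ∑ x : Fin dA, ∑ bb : Fin dB,
          (starRingEnd ℂ) (a y) * a x * (starRingEnd ℂ) (ψ₁ (x, bb)) * ψ₂ (y, bb) :=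
          Finset.sum_comm
  obtain ⟨a, horth2, hspan, hdiag⟩ := zero_diag dA N htr
  exact ⟨a, horth2, hspan, fun k => by rw [hqf (a k), hdiag k]⟩

end
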